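/- Let q ≥ 2 be an integer, let γ > 0, and let L = {(t, γt) : t ∈ ℝ} be the line through the origin of slope γ. Then the one-dimensional Lebesgue measure of {t ∈ ℝ : (t, γt) ∈ G_qⁿ} tends to 0 as n → ∞; consequently the one-dimensional Lebesgue measure of {t ∈ ℝ : (t, γt) ∈ G_q} equals 0. -/

import Mathlib

open MeasureTheory Filter

/-- The closed triangle `E` with vertices `(0,0)`, `(1,0)`, `(0,1)`. -/
def E : Set (ℝ × ℝ) := {p : ℝ × ℝ | 0 ≤ p.1 ∧ 0 ≤ p.2 ∧ p.1 + p.2 ≤ 1}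

/-- The contraction `f_{i,j}(p) = p/q + (i/q, j/q)`. -/
noncomputable def fq (q i j : ℕ) (p : ℝ × ℝ) : ℝ × ℝ :=
  (p.1 / q + i / q, p.2 / q + j / q)

/-- The approximations `G_qⁿ` to the generalized Sierpinski gasket:
`G_q⁰ = E` and `G_q^{n+1} = ⋃_{i+j ≤ q-1} f_{i,j}(G_qⁿ)`. -/
noncomputable def Gq (q : ℕ) : ℕ → Set (ℝ × ℝ)
  | 0 => E
  | n + 1 => ⋃ (ij : ℕ × ℕ) (_ : ij.1 + ij.2 ≤ q - 1), fq q ij.1 ij.2 '' Gq q n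

lemma cast_le_q1 {q i j : ℕ} (hq : 2 ≤ q) (h : i + j ≤ q - 1) :
    (i : ℝ) + (j : ℝ) ≤ (q : ℝ) - 1 := by
  have : ((i + j : ℕ) : ℝ) ≤ ((q - 1 : ℕ) : ℝ) := by exact_mod_cast h
  push_cast [Nat.cast_sub (by omega : 1 ≤ q)] at this
  linarith

lemma fq_mem_E {q i j : ℕ} (hq : 2 ≤ q) (h : i + j ≤ q - 1) {p : ℝ × ℝ} (hp : p ∈ E) :
    fq q i j p ∈ E := by
  obtain ⟨h1, h2, h3⟩ := hp
  have hq0 : (0:ℝ) < q := by positivity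
  have hij := cast_le_q1 hq h
  simp only [fq, E, Set.mem_setOf_eq]
  refine ⟨by positivity, by positivity, ?_⟩
  have heq : (p.1 / q + i / q) + (p.2 / q + j / q) = (p.1 + p.2 + ((i:ℝ) + j)) / q := by ring
  rw [heq, div_le_one hq0]
  linarith

lemma Gq_succ_subset {q : ℕ} (hq : 2 ≤ q) : ∀ n, Gq q (n + 1) ⊆ Gq q n := by
  intro n
  induction n with
  | zero =>
    simp only [Gq]
    refine Set.iUnion_subset fun ij => Set.iUnion_subset fun h => ?_
    rintro p ⟨p', hp', rfl⟩
    exact fq_mem_E hq h hp'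
  | succ n ih =>
    show Gq q (n+2) ⊆ Gq q (n+1)
    simp only [Gq]
    exact Set.iUnion_mono fun ij => Set.iUnion_mono fun h => Set.image_mono ih

lemma Gq_antitone {q : ℕ} (hq : 2 ≤ q) : Antitone (Gq q) :=
  antitone_nat_of_succ_le (Gq_succ_subset hq)

lemma E_compact : IsCompact E := by
  have hsub : E ⊆ Set.Icc ((0:ℝ), (0:ℝ)) (1, 1) := by
    rintro p ⟨h1, h2, h3⟩
    constructor
    · exact ⟨h1, h2⟩
    · exact ⟨by simpa using le_trans (by linarith) h3, by simpa using le_trans (by linarith) h3⟩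
  have hclosed : IsClosed E := by
    have : E = {p : ℝ × ℝ | 0 ≤ p.1} ∩ {p | 0 ≤ p.2} ∩ {p | p.1 + p.2 ≤ 1} := by
      ext p; simp [E]; tauto
    rw [this]
    exact ((isClosed_le continuous_const continuous_fst).inter
      (isClosed_le continuous_const continuous_snd)).inter
      (isClosed_le (continuous_fst.add continuous_snd) continuous_const)
  exact (isCompact_Icc).of_isClosed_subset hclosed hsub

lemma fq_continuous (q i j : ℕ) : Continuous (fq q i j) := by
  unfold fq
  fun_prop

lemma finite_idx (q : ℕ) : Set.Finite {ij : ℕ × ℕ | ij.1 + ij.2 ≤ q - 1} := by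
  apply Set.Finite.subset (Set.finite_Icc (0,0) (q-1, q-1))
  rintro ⟨i, j⟩ h
  simp only [Set.mem_setOf_eq] at h
  exact ⟨⟨Nat.zero_le _, Nat.zero_le _⟩, ⟨by omega, by omega⟩⟩

lemma Gq_compact {q : ℕ} (hq : 2 ≤ q) : ∀ n, IsCompact (Gq q n) := by
  intro n
  induction n with
  | zero => exact E_compact
  | succ n ih =>
    show IsCompact (⋃ (ij : ℕ × ℕ) (_ : ij.1 + ij.2 ≤ q - 1), fq q ij.1 ij.2 '' Gq q n)
    have : (⋃ (ij : ℕ × ℕ) (_ : ij.1 + ij.2 ≤ q - 1), fq q ij.1 ij.2 '' Gq q n)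
        = ⋃ ij ∈ {ij : ℕ × ℕ | ij.1 + ij.2 ≤ q - 1}, fq q ij.1 ij.2 '' Gq q n := rfl
    rw [this]
    exact (finite_idx q).isCompact_biUnion fun ij _ => ih.image (fq_continuous _ _ _)

lemma fract_add_le {x y : ℝ} (hx : 0 ≤ x) (hy : 0 ≤ y) (hxy : x + y ≤ 1) :
    Int.fract x + Int.fract y ≤ 1 := by
  rcases eq_or_lt_of_le (show x ≤ 1 by linarith) with hx1 | hx1
  · have hy0 : y = 0 := by linarith
    rw [hx1, hy0]
    simp [Int.fract_one]
  rcases eq_or_lt_of_le (show y ≤ 1 by linarith) with hy1 | hy1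
  · have hx0 : x = 0 := by linarith
    rw [hy1, hx0]
    simp [Int.fract_one]
  rw [Int.fract_eq_self.mpr ⟨hx, hx1⟩, Int.fract_eq_self.mpr ⟨hy, hy1⟩]
  exact hxy

lemma Gq_fract {q : ℕ} (hq : 2 ≤ q) :
    ∀ k : ℕ, ∀ p ∈ Gq q (k + 1),
      Int.fract ((q:ℝ)^k * p.1) + Int.fract ((q:ℝ)^k * p.2) ≤ 1 := by
  have hqne : (q:ℝ) ≠ 0 := by positivity
  intro k
  induction k with
  | zero =>
    intro p hp
    simp only [Gq, Set.mem_iUnion] at hp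
    obtain ⟨ij, hij, p', hp', rfl⟩ := hp
    have hE : fq q ij.1 ij.2 p' ∈ E := fq_mem_E hq hij hp'
    obtain ⟨h1, h2, h3⟩ := hE
    simpa using fract_add_le h1 h2 h3
  | succ k ih =>
    intro p hp
    simp only [Gq, Set.mem_iUnion] at hp
    obtain ⟨ij, hij, p', hp', rfl⟩ := hp
    have hG : p' ∈ Gq q (k + 1) := hp'
    have e1 : (q:ℝ)^(k+1) * (fq q ij.1 ij.2 p').1
        = (q:ℝ)^k * p'.1 + ((q^k * ij.1 : ℕ) : ℝ) := by
      simp only [fq]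
      push_cast
      field_simp
      ring
    have e2 : (q:ℝ)^(k+1) * (fq q ij.1 ij.2 p').2
        = (q:ℝ)^k * p'.2 + ((q^k * ij.2 : ℕ) : ℝ) := by
      simp only [fq]
      push_cast
      field_simp
      ring
    rw [e1, e2, Int.fract_add_natCast, Int.fract_add_natCast]
    exact ih p' hG

lemma lemR (γ : ℝ) (hγ : 0 < γ) (d : ℝ) :
    ∃ a b : ℝ, 0 ≤ a ∧ b ≤ 1 ∧ min γ 1 / (2*(1+γ)) ≤ b - a ∧
      ∀ v ∈ Set.Ioo a b, 1 < v + Int.fract (γ * v + d) := by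
  have h1γ : (0:ℝ) < 1 + γ := by linarith
  set K : ℤ := ⌊γ + d⌋ with hK
  set vs : ℝ := ((K:ℝ) - d)/γ with hvs
  have hKle : (K:ℝ) ≤ γ + d := Int.floor_le _
  have hKgt : γ + d < (K:ℝ) + 1 := Int.lt_floor_add_one _
  have hγvs : γ * vs = (K:ℝ) - d := by rw [hvs]; field_simp
  have hvs1 : vs ≤ 1 := by rw [hvs, div_le_one hγ]; linarith
  by_cases hcase : vs ≤ 1/2
  · refine ⟨max ((1 + γ*vs)/(1+γ)) 0, 1, le_max_right _ _, le_refl _, ?_, ?_⟩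
    · have ha' : max ((1 + γ*vs)/(1+γ)) 0 ≤ (1 + γ/2)/(1+γ) := by
        apply max_le
        · gcongr
          nlinarith
        · positivity
      have heq : γ/(2*(1+γ)) = 1 - (1+γ/2)/(1+γ) := by field_simp; ring
      have hmin : min γ 1 / (2*(1+γ)) ≤ γ/(2*(1+γ)) := by
        gcongr
        exact min_le_left _ _
      linarith
    · rintro v ⟨hva, hv1⟩
      have hvsa : vs ≤ max ((1 + γ*vs)/(1+γ)) 0 := by
        apply le_max_of_le_left
        rw [le_div_iff₀ h1γ]
        nlinarith
      have hvvs : vs < v := lt_of_le_of_lt hvsa hva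
      have hfl : ⌊γ*v + d⌋ = K := by
        rw [Int.floor_eq_iff]
        constructor
        · nlinarith
        · push_cast; nlinarith
      have hfr : Int.fract (γ*v + d) = γ*v + d - K := by
        rw [Int.fract, hfl]
      have hva' : (1 + γ*vs)/(1+γ) < v := lt_of_le_of_lt (le_max_left _ _) hva
      rw [div_lt_iff₀ h1γ] at hva'
      rw [hfr]
      nlinarith
  · push_neg at hcase
    refine ⟨vs - min (vs/(1+γ)) (1/γ), vs, ?_, hvs1, ?_, ?_⟩
    · have : min (vs/(1+γ)) (1/γ) ≤ vs/(1+γ) := min_le_left _ _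
      have h2 : vs/(1+γ) ≤ vs := by
        rw [div_le_iff₀ h1γ]; nlinarith
      linarith
    · have : vs - (vs - min (vs/(1+γ)) (1/γ)) = min (vs/(1+γ)) (1/γ) := by ring
      rw [this]
      apply le_min
      · calc min γ 1 / (2*(1+γ)) ≤ 1 / (2*(1+γ)) := by gcongr; exact min_le_right _ _
          _ ≤ vs/(1+γ) := by rw [div_le_div_iff₀ (by linarith) h1γ]; nlinarith
      · calc min γ 1 / (2*(1+γ)) ≤ 1 / (2*(1+γ)) := by gcongr; exact min_le_right _ _
          _ ≤ 1/γ := by rw [div_le_div_iff₀ (by linarith) hγ]; nlinarith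
    · rintro v ⟨hva, hvb⟩
      have hamin : vs - 1/γ ≤ vs - min (vs/(1+γ)) (1/γ) := by
        have := min_le_right (vs/(1+γ)) (1/γ); linarith
      have hlow : vs - 1/γ < v := lt_of_le_of_lt hamin hva
      have hfl : ⌊γ*v + d⌋ = K - 1 := by
        rw [Int.floor_eq_iff]
        constructor
        · push_cast
          have h1 : γ * (vs - 1/γ) < γ * v := mul_lt_mul_of_pos_left hlow hγ
          have h2 : γ * (1/γ) = 1 := by field_simp
          nlinarith
        · push_cast
          nlinarith
      have hfr : Int.fract (γ*v + d) = γ*v + d - ((K:ℝ) - 1) := by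
        rw [Int.fract, hfl]
        push_cast
        ring
      have ha2 : γ*vs/(1+γ) ≤ vs - min (vs/(1+γ)) (1/γ) := by
        have h := min_le_left (vs/(1+γ)) (1/γ)
        have heq2 : γ*vs/(1+γ) = vs - vs/(1+γ) := by field_simp; ring
        linarith
      have hva2 : γ*vs/(1+γ) < v := lt_of_le_of_lt ha2 hva
      rw [div_lt_iff₀ h1γ] at hva2
      rw [hfr]
      nlinarith

theorem stmt3 (q : ℕ) (hq : 2 ≤ q) (γ : ℝ) (hγ : 0 < γ) :
    Tendsto (fun n : ℕ => volume {t : ℝ | (t, γ * t) ∈ Gq q n}) atTop (nhds 0) ∧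
    volume {t : ℝ | (t, γ * t) ∈ ⋂ n : ℕ, Gq q n} = 0 := by
  set S : Set ℝ := {t : ℝ | (t, γ * t) ∈ ⋂ n : ℕ, Gq q n} with hSdef
  set δ : ℝ := min γ 1 / (2*(1+γ)) with hδdef
  have hδpos : 0 < δ := div_pos (lt_min hγ one_pos) (by linarith)
  have hδle : δ ≤ 1 := by
    rw [hδdef, div_le_one (by linarith)]
    have : min γ 1 ≤ 1 := min_le_right _ _
    linarith
  have hq1 : (1:ℝ) < q := by exact_mod_cast hq.trans_lt' one_lt_two
  -- every point of S satisfies the fract inequality at every scale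
  have hS_fract : ∀ t ∈ S, ∀ k : ℕ,
      Int.fract ((q:ℝ)^k * t) + Int.fract ((q:ℝ)^k * (γ * t)) ≤ 1 := by
    intro t ht k
    have hmem : (t, γ * t) ∈ Gq q (k + 1) := Set.mem_iInter.mp ht (k + 1)
    exact Gq_fract hq k (t, γ * t) hmem
  -- ball bound
  have hball : ∀ (x : ℝ) (k : ℕ),
      volume (S ∩ Metric.closedBall x (((q:ℝ)^k)⁻¹))
        ≤ ENNReal.ofReal ((2 - δ) * ((q:ℝ)^k)⁻¹) := by
    intro x k
    set P : ℝ := (q:ℝ)^k with hPdef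
    have hP : 0 < P := by positivity
    set m : ℤ := ⌊x * P⌋ with hmdef
    have hm1 : (m:ℝ) ≤ x * P := Int.floor_le _
    have hm2 : x * P < m + 1 := Int.lt_floor_add_one _
    obtain ⟨a, b, ha0, hb1, hab, hgood⟩ := lemR γ hγ (γ * m)
    have habpos : a < b := by
      have h := hab
      rw [← hδdef] at h
      linarith
    set J : Set ℝ := Set.Ioo (((m:ℝ) + a)/P) (((m:ℝ) + b)/P) with hJdef
    have hJball : J ⊆ Metric.closedBall x P⁻¹ := by
      rintro t ⟨ht1, ht2⟩
      rw [Real.closedBall_eq_Icc]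
      have h1 : x - P⁻¹ ≤ ((m:ℝ) + a)/P := by
        rw [le_div_iff₀ hP]
        have : P⁻¹ * P = 1 := inv_mul_cancel₀ hP.ne'
        nlinarith
      have h2 : ((m:ℝ) + b)/P ≤ x + P⁻¹ := by
        rw [div_le_iff₀ hP]
        have : P⁻¹ * P = 1 := inv_mul_cancel₀ hP.ne'
        nlinarith
      exact ⟨by linarith, by linarith⟩
    have hJS : ∀ t ∈ J, t ∉ S := by
      rintro t ⟨ht1, ht2⟩ htS
      have hv1 : (m:ℝ) + a < t * P := by rwa [div_lt_iff₀ hP] at ht1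
      have hv2 : t * P < (m:ℝ) + b := by rwa [lt_div_iff₀ hP] at ht2
      set v : ℝ := t * P - m with hvdef
      have hva : a < v := by simp only [hvdef]; linarith
      have hvb : v < b := by simp only [hvdef]; linarith
      have hfr1 : Int.fract (P * t) = v := by
        have : P * t = v + (m:ℤ) := by push_cast [hvdef]; ring
        rw [this, Int.fract_add_intCast, Int.fract_eq_self.mpr ⟨by linarith, by linarith⟩]
      have hfr2 : Int.fract (P * (γ * t)) = Int.fract (γ * v + γ * m) := by
        have : P * (γ * t) = γ * v + γ * m := by rw [hvdef]; push_cast; ring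
        rw [this]
      have hkey := hgood v ⟨hva, hvb⟩
      have hup := hS_fract t htS k
      rw [← hPdef] at hup
      rw [hfr1, hfr2] at hup
      linarith
    -- measure computation
    have hsub : S ∩ Metric.closedBall x P⁻¹ ⊆ Metric.closedBall x P⁻¹ \ J := by
      rintro t ⟨htS, htB⟩
      exact ⟨htB, fun htJ => hJS t htJ htS⟩
    have hJm : volume J = ENNReal.ofReal ((b - a)/P) := by
      rw [hJdef, Real.volume_Ioo]
      congr 1
      field_simp
      ring
    have hBm : volume (Metric.closedBall x P⁻¹) = ENNReal.ofReal (2 * P⁻¹) :=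
      Real.volume_closedBall x P⁻¹
    calc volume (S ∩ Metric.closedBall x P⁻¹)
        ≤ volume (Metric.closedBall x P⁻¹ \ J) := measure_mono hsub
      _ = volume (Metric.closedBall x P⁻¹) - volume J := by
          rw [measure_diff hJball measurableSet_Ioo.nullMeasurableSet
            (by rw [hJm]; exact ENNReal.ofReal_ne_top)]
      _ ≤ ENNReal.ofReal (2 * P⁻¹) - ENNReal.ofReal (δ * P⁻¹) := by
          rw [hBm, hJm]
          apply tsub_le_tsub le_rfl
          apply ENNReal.ofReal_le_ofReal
          rw [div_eq_mul_inv]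
          gcongr
      _ = ENNReal.ofReal (2 * P⁻¹ - δ * P⁻¹) := by
          rw [ENNReal.ofReal_sub _ (by positivity)]
      _ = ENNReal.ofReal ((2 - δ) * P⁻¹) := by ring_nf
  -- ratio bound
  have hratio : ∀ (x : ℝ) (k : ℕ),
      volume (S ∩ Metric.closedBall x (((q:ℝ)^k)⁻¹)) / volume (Metric.closedBall x (((q:ℝ)^k)⁻¹))
        ≤ ENNReal.ofReal (1 - δ/2) := by
    intro x k
    set P : ℝ := (q:ℝ)^k with hPdef
    have hP : 0 < P := by positivity
    have hBm : volume (Metric.closedBall x P⁻¹) = ENNReal.ofReal (2 * P⁻¹) :=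
      Real.volume_closedBall x P⁻¹
    calc volume (S ∩ Metric.closedBall x P⁻¹) / volume (Metric.closedBall x P⁻¹)
        ≤ ENNReal.ofReal ((2 - δ) * P⁻¹) / ENNReal.ofReal (2 * P⁻¹) := by
          rw [hBm]
          exact ENNReal.div_le_div_right (hball x k) _
      _ = ENNReal.ofReal (((2 - δ) * P⁻¹) / (2 * P⁻¹)) := by
          rw [ENNReal.ofReal_div_of_pos (by positivity)]
      _ = ENNReal.ofReal (1 - δ/2) := by
          congr 1
          rw [mul_div_mul_right _ _ (by positivity : (P⁻¹ : ℝ) ≠ 0)]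
          ring
  have hc1 : ENNReal.ofReal (1 - δ/2) < 1 := by
    rw [← ENNReal.ofReal_one]
    exact ENNReal.ofReal_lt_ofReal_iff_of_nonneg (by linarith) |>.mpr (by linarith)
  -- no point has density 1
  have hnot : ∀ x : ℝ, ¬ Tendsto
      (fun r => volume (S ∩ Metric.closedBall x r) / volume (Metric.closedBall x r))
      (nhdsWithin 0 (Set.Ioi 0)) (nhds 1) := by
    intro x h
    have hws : Tendsto (fun k : ℕ => ((q:ℝ)^k)⁻¹) atTop (nhdsWithin 0 (Set.Ioi 0)) := by
      rw [tendsto_nhdsWithin_iff]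
      constructor
      · exact tendsto_inv_atTop_zero.comp (tendsto_pow_atTop_atTop_of_one_lt hq1)
      · exact Eventually.of_forall fun k => Set.mem_Ioi.mpr (by positivity)
    have hev := (h.comp hws).eventually (Ioi_mem_nhds hc1)
    obtain ⟨k, hk⟩ := hev.exists
    exact absurd (hratio x k) (not_le.mpr hk)
  -- Besicovitch density theorem
  have hS0 : volume S = 0 := by
    have hae := Besicovitch.ae_tendsto_measure_inter_div volume S
    rw [ae_iff] at hae
    have huniv : {x : ℝ | ¬ Tendsto
        (fun r => volume (S ∩ Metric.closedBall x r) / volume (Metric.closedBall x r))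
        (nhdsWithin 0 (Set.Ioi 0)) (nhds 1)} = Set.univ := by
      ext x
      simp only [Set.mem_setOf_eq, Set.mem_univ, iff_true]
      exact hnot x
    rw [huniv] at hae
    rwa [Measure.restrict_apply_univ] at hae
  refine ⟨?_, hS0⟩
  -- continuity from above
  set A : ℕ → Set ℝ := fun n => {t : ℝ | (t, γ * t) ∈ Gq q n} with hAdef
  have hcont : Continuous (fun t : ℝ => (t, γ * t)) :=
    continuous_id.prodMk (continuous_const.mul continuous_id)
  have hAmeas : ∀ n, NullMeasurableSet (A n) volume := fun n =>
    (((Gq_compact hq n).isClosed.preimage hcont).measurableSet).nullMeasurableSet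
  have hAanti : Antitone A := fun n m hnm => Set.preimage_mono (Gq_antitone hq hnm)
  have hAfin : ∃ n, volume (A n) ≠ ⊤ := by
    refine ⟨0, ?_⟩
    have hsub : A 0 ⊆ Set.Icc 0 1 := by
      intro t ht
      obtain ⟨h1, h2, h3⟩ := ht
      simp only [Set.mem_Icc]
      constructor
      · exact h1
      · nlinarith
    exact ne_top_of_le_ne_top (by simp) (measure_mono hsub)
  have htend := tendsto_measure_iInter_atTop hAmeas hAanti hAfin
  have hiInter : (⋂ n, A n) = S := by
    ext t
    simp only [hAdef, Set.mem_iInter, Set.mem_setOf_eq, hSdef]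
  rw [hiInter, hS0] at htend
  exact htend
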